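/- Let f : ℝ² → ℝ² be a homeomorphism with an attracting fixed point x₀ and let U be the basin of attraction of x₀ with respect to f. Then U is open, connected, and simply connected. -/

import Mathlib

open Filter

/-- `x₀` is an attracting fixed point for `f`: it is fixed and has a compact
neighborhood `W` whose forward iterates converge to `{x₀}` in the Hausdorff
topology, i.e. eventually enter every neighborhood of `x₀`. -/
def IsAttractingFixedPt {X : Type*} [TopologicalSpace X] (f : X → X) (x₀ : X) : Prop :=
  f x₀ = x₀ ∧ ∃ W : Set X, IsCompact W ∧ W ∈ nhds x₀ ∧
    ∀ N ∈ nhds x₀, ∀ᶠ n : ℕ in atTop, f^[n] '' W ⊆ N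

/-- The basin of attraction of `x₀` with respect to `f`:
the set of points whose forward orbit converges to `x₀`. -/
def basin {X : Type*} [TopologicalSpace X] (f : X → X) (x₀ : X) : Set X :=
  {x | Tendsto (fun n => f^[n] x) atTop (nhds x₀)}

attribute [local instance] Path.Homotopic.setoid

/-- the `n`-th iterate of a self-homeomorphism, as a homeomorphism. -/
def homeomorphIterate {X : Type*} [TopologicalSpace X] (f : X ≃ₜ X) : ℕ → (X ≃ₜ X)
  | 0 => Homeomorph.refl X
  | n + 1 => (homeomorphIterate f n).trans f

theorem homeomorphIterate_coe {X : Type*} [TopologicalSpace X] (f : X ≃ₜ X) (n : ℕ) :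
    ⇑(homeomorphIterate f n) = (⇑f)^[n] := by
  induction n with
  | zero => rfl
  | succ n ih =>
    funext x
    simp [homeomorphIterate, ih, Function.iterate_succ_apply' (⇑f) n x]

/-- A monotone union of open simply connected subsets is simply connected. -/
theorem simplyConnected_of_monotone_union {X : Type*} [TopologicalSpace X] (D : ℕ → Set X)
    (x₀ : X) (hmono : Monotone D) (hopen : ∀ k, IsOpen (D k)) (hx₀ : ∀ k, x₀ ∈ D k)
    (hsc : ∀ k, SimplyConnectedSpace (D k)) :
    SimplyConnectedSpace ↥(⋃ k, D k) := by
  have hsub : ∀ k, D k ⊆ ⋃ k, D k := fun k => Set.subset_iUnion D k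
  have hpc : ∀ k, IsPathConnected (D k) := fun k => by
    haveI := hsc k
    exact isPathConnected_iff_pathConnectedSpace.mpr inferInstance
  have hUpath : IsPathConnected (⋃ k, D k) := by
    refine ⟨x₀, hsub 0 (hx₀ 0), fun {y} hy => ?_⟩
    obtain ⟨k, hk⟩ := Set.mem_iUnion.mp hy
    exact ((hpc k).joinedIn x₀ (hx₀ k) y hk).mono (hsub k)
  rw [simply_connected_iff_paths_homotopic]
  refine ⟨isPathConnected_iff_pathConnectedSpace.mp hUpath, fun x y => ⟨fun P Q => ?_⟩⟩
  refine Quotient.inductionOn₂ P Q fun p q => ?_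
  set K : Set X := Set.range (fun t => (p t : X)) ∪ Set.range (fun t => (q t : X)) with hK
  have hKc : IsCompact K :=
    (isCompact_range (continuous_subtype_val.comp p.continuous)).union
      (isCompact_range (continuous_subtype_val.comp q.continuous))
  have hKU : K ⊆ ⋃ k, D k := by
    rintro z (⟨t, rfl⟩ | ⟨t, rfl⟩)
    exacts [(p t).2, (q t).2]
  obtain ⟨k, hk⟩ := hKc.elim_directed_cover D hopen hKU hmono.directed_le
  have hpk : ∀ t, (p t : X) ∈ D k := fun t => hk (Or.inl ⟨t, rfl⟩)
  have hqk : ∀ t, (q t : X) ∈ D k := fun t => hk (Or.inr ⟨t, rfl⟩)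
  have hxk : (x : X) ∈ D k := by
    have := hpk 0
    rwa [p.source] at this
  have hyk : (y : X) ∈ D k := by
    have := hpk 1
    rwa [p.target] at this
  set px : ↥(D k) := ⟨(x : X), hxk⟩ with hpx
  set py : ↥(D k) := ⟨(y : X), hyk⟩ with hpy
  have hUmem : ∀ z : X, z ∈ D k → z ∈ ⋃ k, D k := fun z hz => hsub k hz
  let incl : C(↥(D k), ↥(⋃ k, D k)) :=
    ⟨fun z => ⟨z.1, hUmem z.1 z.2⟩, Continuous.subtype_mk continuous_subtype_val _⟩
  let p' : Path px py :=
    { toFun := fun t => ⟨(p t : X), hpk t⟩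
      continuous_toFun := Continuous.subtype_mk (continuous_subtype_val.comp p.continuous) _
      source' := by ext; simp [hpx]
      target' := by ext; simp [hpy] }
  let q' : Path px py :=
    { toFun := fun t => ⟨(q t : X), hqk t⟩
      continuous_toFun := Continuous.subtype_mk (continuous_subtype_val.comp q.continuous) _
      source' := by ext; simp [hpx]
      target' := by ext; simp [hpy] }
  haveI := hsc k
  have h2 : Path.Homotopic p' q' := Quotient.exact (Subsingleton.elim (α := Path.Homotopic.Quotient px py) ⟦p'⟧ ⟦q'⟧)
  have h3 := h2.map incl
  have hpmap : p'.map incl.continuous = p := by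
    ext t
    rfl
  have hqmap : q'.map incl.continuous = q := by
    ext t
    rfl
  rw [hpmap, hqmap] at h3
  exact Quotient.sound h3

/-- The basin of attraction of an attracting fixed point of a homeomorphism of the
plane is open, connected and simply connected. -/
theorem stmt_13 (f : EuclideanSpace ℝ (Fin 2) ≃ₜ EuclideanSpace ℝ (Fin 2))
    (x₀ : EuclideanSpace ℝ (Fin 2)) (hf : IsAttractingFixedPt (⇑f) x₀) :
    IsOpen (basin (⇑f) x₀) ∧ IsConnected (basin (⇑f) x₀) ∧
      SimplyConnectedSpace (basin (⇑f) x₀) := by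
  obtain ⟨hfix, W, hWc, hWn, hWt⟩ := hf
  obtain ⟨r, hr, hrW⟩ := Metric.mem_nhds_iff.mp hWn
  set B := Metric.ball x₀ r with hB
  obtain ⟨m₀, hm₀⟩ := eventually_atTop.mp (hWt B (Metric.ball_mem_nhds x₀ hr))
  set m := m₀ + 1 with hmdef
  have hm : ∀ n, m ≤ n → (⇑f)^[n] '' W ⊆ B := fun n hn => hm₀ n (le_trans (Nat.le_succ m₀) hn)
  have hmpos : 0 < m := Nat.succ_pos m₀
  have hfixn : ∀ n, (⇑f)^[n] x₀ = x₀ := fun n => Function.iterate_fixed hfix n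
  set D : ℕ → Set (EuclideanSpace ℝ (Fin 2)) := fun k => (⇑f)^[k * m] ⁻¹' B with hD
  have hx₀D : ∀ k, x₀ ∈ D k := fun k => by
    simp only [hD, Set.mem_preimage, hfixn]
    exact Metric.mem_ball_self hr
  have hmono : Monotone D := by
    apply monotone_nat_of_le_succ
    intro k z hz
    have : (⇑f)^[(k + 1) * m] z = (⇑f)^[m] ((⇑f)^[k * m] z) := by
      rw [← Function.iterate_add_apply]
      congr 1
      ring
    show (⇑f)^[(k + 1) * m] z ∈ B
    rw [this]
    exact hm m le_rfl ⟨(⇑f)^[k * m] z, hrW hz, rfl⟩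
  have hDopen : ∀ k, IsOpen (D k) := fun k =>
    Metric.isOpen_ball.preimage (f.continuous.iterate (k * m))
  have hunion : basin (⇑f) x₀ = ⋃ k, D k := by
    ext z
    constructor
    · intro hz
      have hev : ∀ᶠ n in atTop, (⇑f)^[n] z ∈ B := hz (Metric.ball_mem_nhds x₀ hr)
      obtain ⟨N, hN⟩ := eventually_atTop.mp hev
      exact Set.mem_iUnion.mpr ⟨N, hN (N * m) (Nat.le_mul_of_pos_right N hmpos)⟩
    · intro hz
      obtain ⟨k, hk⟩ := Set.mem_iUnion.mp hz
      rw [basin, Set.mem_setOf_eq, tendsto_def]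
      intro N hN
      obtain ⟨M, hM⟩ := eventually_atTop.mp (hWt N hN)
      rw [mem_atTop_sets]
      refine ⟨k * m + M, fun n hn => ?_⟩
      have h1 : (⇑f)^[n] z = (⇑f)^[n - k * m] ((⇑f)^[k * m] z) := by
        rw [← Function.iterate_add_apply]
        congr 1
        omega
      have h2 : (⇑f)^[k * m] z ∈ W := hrW hk
      have h3 : M ≤ n - k * m := by omega
      exact hM (n - k * m) h3 ⟨(⇑f)^[k * m] z, h2, h1.symm⟩
  -- each D k is homeomorphic to the ball B
  have hDeq : ∀ k, ((homeomorphIterate f (k * m)).symm) '' B = D k := by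
    intro k
    rw [hD]
    ext z
    simp only [Set.mem_image, Set.mem_preimage]
    constructor
    · rintro ⟨w, hw, rfl⟩
      have : (⇑f)^[k * m] ((homeomorphIterate f (k * m)).symm w) = w := by
        rw [← homeomorphIterate_coe]
        exact (homeomorphIterate f (k * m)).apply_symm_apply w
      rwa [this]
    · intro hz
      refine ⟨(⇑f)^[k * m] z, hz, ?_⟩
      rw [← homeomorphIterate_coe]
      exact (homeomorphIterate f (k * m)).symm_apply_apply z
  have hBcontr : ContractibleSpace ↥B :=
    (convex_ball x₀ r).contractibleSpace ⟨x₀, Metric.mem_ball_self hr⟩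
  have hDsc : ∀ k, SimplyConnectedSpace ↥(D k) := by
    intro k
    have e : ↥B ≃ₜ ↥(D k) :=
      ((homeomorphIterate f (k * m)).symm.image B).trans (Homeomorph.setCongr (hDeq k))
    haveI : ContractibleSpace ↥(D k) := e.symm.contractibleSpace
    infer_instance
  have hsc : SimplyConnectedSpace ↥(⋃ k, D k) :=
    simplyConnected_of_monotone_union D x₀ hmono hDopen hx₀D hDsc
  haveI := hsc
  have hpconn : IsPathConnected (⋃ k, D k) := by
    have : PathConnectedSpace ↥(⋃ k, D k) := inferInstance
    exact isPathConnected_iff_pathConnectedSpace.mpr this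
  refine ⟨?_, ?_, ?_⟩
  · rw [hunion]; exact isOpen_iUnion hDopen
  · rw [hunion]; exact hpconn.isConnected
  · rw [hunion]; exact hsc
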